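/- Let X ≥ 0 be an integrable random variable with a, b, ψ > 0. Then the left derivative at ψ of the map s ↦ E[min(b, asX)] equals a·E[X·1{X ≤ b/(aψ)}], i.e. lim_{δ→0⁺} (E[min(b, aψX)] − E[min(b, a(ψ−δ)X)])/δ = a·E[X·1{X ≤ b/(aψ)}]. -/

import Mathlib

open MeasureTheory

private lemma min_lip (b u v : ℝ) : |min b u - min b v| ≤ |u - v| := by
  have := abs_min_sub_min_le_max b u b v
  simpa using this

private lemma stmt16_aux {Ω : Type*} [MeasurableSpace Ω] (μ : Measure Ω) [IsProbabilityMeasure μ]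
    (X : Ω → ℝ) (hXm : Measurable X) (hX : Integrable X μ) (hpos : ∀ ω, 0 ≤ X ω)
    (a b ψ : ℝ) (ha : 0 < a) (hb : 0 < b) (hψ : 0 < ψ) :
    Filter.Tendsto
      (fun δ : ℝ =>
        ((∫ ω, min b (a * ψ * X ω) ∂μ) - ∫ ω, min b (a * (ψ - δ) * X ω) ∂μ) / δ)
      (nhdsWithin 0 (Set.Ioi 0))
      (nhds (a * ∫ ω in {ω | X ω ≤ b / (a * ψ)}, X ω ∂μ)) := by
  have haψ : 0 < a * ψ := mul_pos ha hψ
  set s : Set Ω := {ω | X ω ≤ b / (a * ψ)} with hs_def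
  have hs : MeasurableSet s := measurableSet_le hXm measurable_const
  set g : Ω → ℝ := s.indicator (fun ω => a * X ω) with hg_def
  have hg_int : ∫ ω, g ω ∂μ = a * ∫ ω in s, X ω ∂μ := by
    rw [hg_def, integral_indicator hs, integral_const_mul]
  set F : ℝ → Ω → ℝ := fun δ ω => (min b (a * ψ * X ω) - min b (a * (ψ - δ) * X ω)) / δ
    with hF_def
  -- integrability of the truncated variables
  have int_min : ∀ c : ℝ, 0 ≤ c → Integrable (fun ω => min b (c * X ω)) μ := by
    intro c hc
    refine (integrable_const b).mono' ?_ ?_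
    · exact (measurable_const.min (measurable_const.mul hXm)).aestronglyMeasurable
    · refine Filter.Eventually.of_forall fun ω => ?_
      have h0 : (0 : ℝ) ≤ min b (c * X ω) :=
        le_min hb.le (mul_nonneg hc (hpos ω))
      rw [Real.norm_eq_abs, abs_of_nonneg h0]
      exact min_le_left _ _
  have hmeas : ∀ δ : ℝ, AEStronglyMeasurable (F δ) μ := by
    intro δ
    exact (((measurable_const.min (measurable_const.mul hXm)).sub
      (measurable_const.min (measurable_const.mul hXm))).div_const δ).aestronglyMeasurable
  have h_bound : ∀ᶠ δ in nhdsWithin (0:ℝ) (Set.Ioi 0),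
      ∀ᵐ ω ∂μ, ‖F δ ω‖ ≤ a * X ω := by
    filter_upwards [self_mem_nhdsWithin] with δ (hδ : 0 < δ)
    refine Filter.Eventually.of_forall fun ω => ?_
    have h1 : |min b (a * ψ * X ω) - min b (a * (ψ - δ) * X ω)|
        ≤ |a * ψ * X ω - a * (ψ - δ) * X ω| := min_lip _ _ _
    have h2 : a * ψ * X ω - a * (ψ - δ) * X ω = a * δ * X ω := by ring
    rw [hF_def]
    simp only [Real.norm_eq_abs, abs_div, abs_of_pos hδ]
    rw [div_le_iff₀ hδ]
    calc |min b (a * ψ * X ω) - min b (a * (ψ - δ) * X ω)| ≤ |a * δ * X ω| := by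
          rw [← h2]; exact h1
      _ = a * δ * X ω := abs_of_nonneg (mul_nonneg (mul_nonneg ha.le hδ.le) (hpos ω))
      _ = a * X ω * δ := by ring
  have h_lim : ∀ ω, Filter.Tendsto (fun δ => F δ ω) (nhdsWithin (0:ℝ) (Set.Ioi 0))
      (nhds (g ω)) := by
    intro ω
    by_cases hω : X ω ≤ b / (a * ψ)
    · have hgω : g ω = a * X ω :=
        Set.indicator_of_mem (show ω ∈ s from hω) _
      have hle : a * ψ * X ω ≤ b := by
        have := (le_div_iff₀ haψ).1 hω
        nlinarith
      rw [hgω]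
      refine Filter.Tendsto.congr' ?_ tendsto_const_nhds
      filter_upwards [self_mem_nhdsWithin] with δ (hδ : 0 < δ)
      have hle2 : a * (ψ - δ) * X ω ≤ b := by
        have h3 : 0 ≤ a * δ * X ω := mul_nonneg (mul_nonneg ha.le hδ.le) (hpos ω)
        nlinarith
      rw [hF_def]
      simp only [min_eq_right hle, min_eq_right hle2]
      field_simp
      ring
    · push_neg at hω
      have hx : 0 < X ω := lt_trans (div_pos hb haψ) hω
      have hbx : b < a * ψ * X ω := by
        rw [div_lt_iff₀ haψ] at hω
        nlinarith
      have hax : 0 < a * X ω := mul_pos ha hx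
      set ε : ℝ := ψ - b / (a * X ω) with hε_def
      have hε : 0 < ε := by
        rw [hε_def, sub_pos, div_lt_iff₀ hax]
        nlinarith
      have hgω : g ω = 0 := by
        rw [hg_def, Set.indicator_of_notMem (by simpa [hs_def] using hω.not_ge)]
      rw [hgω]
      refine Filter.Tendsto.congr' ?_ tendsto_const_nhds
      filter_upwards [Ioo_mem_nhdsGT_of_mem (Set.mem_Ico.2 ⟨le_refl (0:ℝ), hε⟩)]
        with δ hδ
      have hδ1 : 0 < δ := hδ.1
      have hδ2 : δ < ε := hδ.2
      have hble : b ≤ a * (ψ - δ) * X ω := by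
        have : b / (a * X ω) < ψ - δ := by
          rw [hε_def] at hδ2; linarith
        rw [div_lt_iff₀ hax] at this
        nlinarith
      rw [hF_def]
      simp only
      rw [min_eq_left hble, min_eq_left hbx.le]
      simp
  have H : Filter.Tendsto (fun δ => ∫ ω, F δ ω ∂μ) (nhdsWithin (0:ℝ) (Set.Ioi 0))
      (nhds (∫ ω, g ω ∂μ)) := by
    refine tendsto_integral_filter_of_dominated_convergence (fun ω => a * X ω)
      (Filter.Eventually.of_forall hmeas) h_bound (hX.const_mul a)
      (Filter.Eventually.of_forall h_lim)
  rw [hg_int] at H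
  refine H.congr' ?_
  filter_upwards [Ioo_mem_nhdsGT_of_mem (Set.mem_Ico.2 ⟨le_refl (0:ℝ), hψ⟩)] with δ hδ
  have hδψ : 0 ≤ ψ - δ := le_of_lt (sub_pos.2 hδ.2)
  rw [hF_def]
  simp only
  rw [← integral_sub (int_min _ haψ.le) (int_min _ (mul_nonneg ha.le hδψ)), ← integral_div]

/-- Left derivative of `ψ ↦ E[min(b, aψX)]`: for `X ≥ 0` integrable it equals
`a·E[X·1{X ≤ b/(aψ)}]` (no atom condition needed). -/
theorem stmt16 {Ω : Type*} [MeasurableSpace Ω] (μ : Measure Ω) [IsProbabilityMeasure μ]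
    (X : Ω → ℝ) (hX : Integrable X μ) (hpos : ∀ ω, 0 ≤ X ω)
    (a b ψ : ℝ) (ha : 0 < a) (hb : 0 < b) (hψ : 0 < ψ) :
    Filter.Tendsto
      (fun δ : ℝ =>
        ((∫ ω, min b (a * ψ * X ω) ∂μ) - ∫ ω, min b (a * (ψ - δ) * X ω) ∂μ) / δ)
      (nhdsWithin 0 (Set.Ioi 0))
      (nhds (a * ∫ ω in {ω | X ω ≤ b / (a * ψ)}, X ω ∂μ)) := by
  set Y : Ω → ℝ := fun ω => max (hX.1.mk X ω) 0 with hY_def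
  have hYm : Measurable Y := hX.1.stronglyMeasurable_mk.measurable.max measurable_const
  have hXY : X =ᵐ[μ] Y := by
    filter_upwards [hX.1.ae_eq_mk] with ω h
    rw [hY_def]; simp only
    rw [← h, max_eq_left (hpos ω)]
  have hYint : Integrable Y μ := hX.congr hXY
  have hYpos : ∀ ω, 0 ≤ Y ω := fun ω => le_max_right _ _
  have H := stmt16_aux μ Y hYm hYint hYpos a b ψ ha hb hψ
  have hsets : {ω | Y ω ≤ b / (a * ψ)} =ᵐ[μ] {ω | X ω ≤ b / (a * ψ)} := by
    filter_upwards [hXY] with ω h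
    exact congrArg (· ≤ b / (a * ψ)) h.symm
  have hlimeq : (∫ ω in {ω | Y ω ≤ b / (a * ψ)}, Y ω ∂μ)
      = ∫ ω in {ω | X ω ≤ b / (a * ψ)}, X ω ∂μ := by
    rw [setIntegral_congr_set hsets]
    exact integral_congr_ae (ae_restrict_of_ae hXY.symm)
  rw [hlimeq] at H
  refine H.congr' ?_
  refine Filter.Eventually.of_forall fun δ => ?_
  have h1 : (∫ ω, min b (a * ψ * Y ω) ∂μ) = ∫ ω, min b (a * ψ * X ω) ∂μ := by
    refine integral_congr_ae ?_
    filter_upwards [hXY] with ω h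
    rw [h]
  have h2 : (∫ ω, min b (a * (ψ - δ) * Y ω) ∂μ) = ∫ ω, min b (a * (ψ - δ) * X ω) ∂μ := by
    refine integral_congr_ae ?_
    filter_upwards [hXY] with ω h
    rw [h]
  simp only [h1, h2]
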